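/- If the signed area satisfies A > 0 and h > 0, then the consistency part of the first-order VEM element stiffness matrix, K^consis = Π*ᵀ·G̃·Π*, has rank exactly 2, for any choice of the point (x_K, y_K). -/

import Mathlib

open Matrix Real Filter

noncomputable section

/-- The boundary-integral vectors `a_i = (1/2)·(y_{i+1} − y_{i−1}, x_{i−1} − x_{i+1})`
of a planar polygon with cyclically indexed vertex coordinates. -/
def aVec (N : ℕ) (x y : ZMod N → ℝ) (i : ZMod N) : Fin 2 → ℝ :=
  ![(y (i + 1) - y (i - 1)) / 2, (x (i - 1) - x (i + 1)) / 2]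

/-- The signed (shoelace) area `A = (1/2)·Σ_i (x_i y_{i+1} − x_{i+1} y_i)`. -/
def shoelace (N : ℕ) [NeZero N] (x y : ZMod N → ℝ) : ℝ :=
  (1 / 2) * ∑ i : ZMod N, (x i * y (i + 1) - x (i + 1) * y i)

/-- The `3×N` matrix `B` of the first-order VEM. -/
def Bmat (N : ℕ) (x y : ZMod N → ℝ) (h : ℝ) : Matrix (Fin 3) (ZMod N) ℝ :=
  Matrix.of fun α i => ![(1 : ℝ) / N, aVec N x y i 0 / h, aVec N x y i 1 / h] α

/-- The `N×3` matrix `D` of the first-order VEM, `D_{iα} = m_α(x_i, y_i)` with scaled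
monomials `m₁ = 1`, `m₂ = (x − x_K)/h`, `m₃ = (y − y_K)/h`. -/
def Dmat (N : ℕ) (x y : ZMod N → ℝ) (h xK yK : ℝ) : Matrix (ZMod N) (Fin 3) ℝ :=
  Matrix.of fun i α => ![(1 : ℝ), (x i - xK) / h, (y i - yK) / h] α

/-- `G = diag(1, A/h², A/h²)`. -/
def Gmat (N : ℕ) [NeZero N] (x y : ZMod N → ℝ) (h : ℝ) : Matrix (Fin 3) (Fin 3) ℝ :=
  Matrix.diagonal ![1, shoelace N x y / h ^ 2, shoelace N x y / h ^ 2]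

/-- `G̃ = diag(0, A/h², A/h²)`. -/
def Gtil (N : ℕ) [NeZero N] (x y : ZMod N → ℝ) (h : ℝ) : Matrix (Fin 3) (Fin 3) ℝ :=
  Matrix.diagonal ![0, shoelace N x y / h ^ 2, shoelace N x y / h ^ 2]

/-- `Π* = G⁻¹·B`. -/
def PiStar (N : ℕ) [NeZero N] (x y : ZMod N → ℝ) (h : ℝ) : Matrix (Fin 3) (ZMod N) ℝ :=
  (Gmat N x y h)⁻¹ * Bmat N x y h

/-- `Π = D·Π*`. -/
def PiMat (N : ℕ) [NeZero N] (x y : ZMod N → ℝ) (h xK yK : ℝ) :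
    Matrix (ZMod N) (ZMod N) ℝ :=
  Dmat N x y h xK yK * PiStar N x y h

/-- The consistency part `K^consis = Π*ᵀ·G̃·Π*` of the VEM element stiffness matrix. -/
def Kconsis (N : ℕ) [NeZero N] (x y : ZMod N → ℝ) (h : ℝ) :
    Matrix (ZMod N) (ZMod N) ℝ :=
  (PiStar N x y h)ᵀ * Gtil N x y h * PiStar N x y h

/-- The first-order VEM element stiffness matrix
`K = Π*ᵀ·G̃·Π* + τ·(I − Π)ᵀ·(I − Π)`. -/
def Kmat (N : ℕ) [NeZero N] (x y : ZMod N → ℝ) (h τ xK yK : ℝ) :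
    Matrix (ZMod N) (ZMod N) ℝ :=
  Kconsis N x y h +
    τ • ((1 - PiMat N x y h xK yK)ᵀ * (1 - PiMat N x y h xK yK))


private lemma sum_shift' {N : ℕ} [NeZero N] (f : ZMod N → ℝ) :
    ∑ i : ZMod N, f (i + 1) = ∑ i : ZMod N, f i :=
  Fintype.sum_equiv (Equiv.addRight 1) _ _ fun _ => rfl

private lemma key1' {N : ℕ} [NeZero N] (x y : ZMod N → ℝ) :
    ∑ i : ZMod N, (y (i + 1) - y (i - 1)) * x i = 2 * shoelace N x y := by
  have h1 : ∑ i : ZMod N, y (i - 1) * x i = ∑ i : ZMod N, x (i + 1) * y i := by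
    rw [← sum_shift' (fun i => y (i - 1) * x i)]
    exact Finset.sum_congr rfl fun i _ => by rw [add_sub_cancel_right]; ring
  have h2 : ∑ i : ZMod N, (y (i + 1) - y (i - 1)) * x i
      = ∑ i : ZMod N, x i * y (i + 1) - ∑ i : ZMod N, y (i - 1) * x i := by
    rw [← Finset.sum_sub_distrib]
    exact Finset.sum_congr rfl fun i _ => by ring
  rw [h2, h1, shoelace, Finset.sum_sub_distrib]; ring

private lemma key2' {N : ℕ} [NeZero N] (y : ZMod N → ℝ) :
    ∑ i : ZMod N, (y (i + 1) - y (i - 1)) * y i = 0 := by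
  have h1 : ∑ i : ZMod N, y (i - 1) * y i = ∑ i : ZMod N, y (i + 1) * y i := by
    rw [← sum_shift' (fun i => y (i - 1) * y i)]
    exact Finset.sum_congr rfl fun i _ => by rw [add_sub_cancel_right]; ring
  have h2 : ∑ i : ZMod N, (y (i + 1) - y (i - 1)) * y i
      = ∑ i : ZMod N, y (i + 1) * y i - ∑ i : ZMod N, y (i - 1) * y i := by
    rw [← Finset.sum_sub_distrib]
    exact Finset.sum_congr rfl fun i _ => by ring
  rw [h2, h1, sub_self]

private lemma key3' {N : ℕ} [NeZero N] (x : ZMod N → ℝ) :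
    ∑ i : ZMod N, (x (i - 1) - x (i + 1)) * x i = 0 := by
  have h1 : ∑ i : ZMod N, x (i - 1) * x i = ∑ i : ZMod N, x (i + 1) * x i := by
    rw [← sum_shift' (fun i => x (i - 1) * x i)]
    exact Finset.sum_congr rfl fun i _ => by rw [add_sub_cancel_right]; ring
  have h2 : ∑ i : ZMod N, (x (i - 1) - x (i + 1)) * x i
      = ∑ i : ZMod N, x (i - 1) * x i - ∑ i : ZMod N, x (i + 1) * x i := by
    rw [← Finset.sum_sub_distrib]
    exact Finset.sum_congr rfl fun i _ => by ring
  rw [h2, h1, sub_self]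

private lemma key4' {N : ℕ} [NeZero N] (x y : ZMod N → ℝ) :
    ∑ i : ZMod N, (x (i - 1) - x (i + 1)) * y i = 2 * shoelace N x y := by
  have h1 : ∑ i : ZMod N, x (i - 1) * y i = ∑ i : ZMod N, x i * y (i + 1) := by
    rw [← sum_shift' (fun i => x (i - 1) * y i)]
    exact Finset.sum_congr rfl fun i _ => by rw [add_sub_cancel_right]
  have h2 : ∑ i : ZMod N, (x (i - 1) - x (i + 1)) * y i
      = ∑ i : ZMod N, x (i - 1) * y i - ∑ i : ZMod N, x (i + 1) * y i := by
    rw [← Finset.sum_sub_distrib]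
    exact Finset.sum_congr rfl fun i _ => by ring
  rw [h2, h1, shoelace, Finset.sum_sub_distrib]; ring

set_option maxHeartbeats 1000000 in
/-- If `A > 0` and `h > 0`, the consistency part `K^consis = Π*ᵀ·G̃·Π*` of the
first-order VEM element stiffness matrix has rank exactly `2`. -/
theorem stmt5 (N : ℕ) [NeZero N] (hN : 3 ≤ N) (x y : ZMod N → ℝ)
    (h : ℝ) (hh : 0 < h) (hA : 0 < shoelace N x y) :
    (Kconsis N x y h).rank = 2 := by
  classical
  have hA' := hA.ne'
  have hh' := hh.ne'
  set s : ℝ := Real.sqrt (h ^ 2 / shoelace N x y) with hsdef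
  have hspos : 0 < s := Real.sqrt_pos.mpr (by positivity)
  have hs' : s ≠ 0 := hspos.ne'
  have hs : s * s = h ^ 2 / shoelace N x y := Real.mul_self_sqrt (by positivity)
  set P : Matrix (Fin 2) (ZMod N) ℝ :=
    Matrix.of fun (α : Fin 2) i => s * (aVec N x y i α / h) with hPdef
  -- Step 1: K^consis = Pᵀ * P
  have hKP : Kconsis N x y h = Pᵀ * P := by
    have hGinv : (Gmat N x y h)⁻¹
        = Matrix.diagonal ![1, h ^ 2 / shoelace N x y, h ^ 2 / shoelace N x y] := by
      apply Matrix.inv_eq_right_inv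
      rw [Gmat, Matrix.diagonal_mul_diagonal]
      ext i j
      fin_cases i <;> fin_cases j <;>
        simp [Matrix.diagonal_apply, Matrix.one_apply] <;> field_simp
    have hmm : ∀ u v : ℝ, s * u * (s * v) = (h ^ 2 / shoelace N x y) * (u * v) := by
      intro u v
      rw [show s * u * (s * v) = s * s * (u * v) by ring, hs]
    have hK : Kconsis N x y h = (PiStar N x y h)ᵀ * (Gtil N x y h * PiStar N x y h) := by
      rw [Kconsis, Matrix.mul_assoc]
    rw [hK]
    ext i j
    simp only [PiStar, hGinv, Gtil, Matrix.mul_apply, Matrix.transpose_apply,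
      Matrix.diagonal_mul, Fin.sum_univ_three, Fin.sum_univ_two, Bmat, Matrix.of_apply,
      Matrix.cons_val_zero, Matrix.cons_val_one, Matrix.head_cons, Matrix.cons_val_two,
      Matrix.tail_cons, hPdef]
    norm_num [Fin.ext_iff, Matrix.cons_val]
    simp only [hmm]
    field_simp
    simp only [Matrix.cons_val_two, Matrix.vecHead, Matrix.vecTail, Function.comp_apply, Fin.succ_one_eq_two, Matrix.cons_val_one, Matrix.cons_val_zero, Matrix.cons_val_succ, Fin.succ_zero_eq_one]
    field_simp
  -- Step 2: the images of x and y under P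
  have hx0 : ∑ i : ZMod N, P 0 i * x i = s * shoelace N x y / h := by
    have : ∑ i : ZMod N, P 0 i * x i
        = (s / (2 * h)) * ∑ i : ZMod N, (y (i + 1) - y (i - 1)) * x i := by
      rw [Finset.mul_sum]
      refine Finset.sum_congr rfl fun i _ => ?_
      simp only [hPdef, Matrix.of_apply, aVec, Matrix.cons_val_zero]
      ring
    rw [this, key1' x y]; field_simp
  have hx1 : ∑ i : ZMod N, P 1 i * x i = 0 := by
    have : ∑ i : ZMod N, P 1 i * x i
        = (s / (2 * h)) * ∑ i : ZMod N, (x (i - 1) - x (i + 1)) * x i := by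
      rw [Finset.mul_sum]
      refine Finset.sum_congr rfl fun i _ => ?_
      simp only [hPdef, Matrix.of_apply, aVec, Matrix.cons_val_one, Matrix.head_cons, Matrix.cons_val_zero]
      ring
    rw [this, key3' x, mul_zero]
  have hy0 : ∑ i : ZMod N, P 0 i * y i = 0 := by
    have : ∑ i : ZMod N, P 0 i * y i
        = (s / (2 * h)) * ∑ i : ZMod N, (y (i + 1) - y (i - 1)) * y i := by
      rw [Finset.mul_sum]
      refine Finset.sum_congr rfl fun i _ => ?_
      simp only [hPdef, Matrix.of_apply, aVec, Matrix.cons_val_zero]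
      ring
    rw [this, key2' y, mul_zero]
  have hy1 : ∑ i : ZMod N, P 1 i * y i = s * shoelace N x y / h := by
    have : ∑ i : ZMod N, P 1 i * y i
        = (s / (2 * h)) * ∑ i : ZMod N, (x (i - 1) - x (i + 1)) * y i := by
      rw [Finset.mul_sum]
      refine Finset.sum_congr rfl fun i _ => ?_
      simp only [hPdef, Matrix.of_apply, aVec, Matrix.cons_val_one, Matrix.head_cons, Matrix.cons_val_zero]
      ring
    rw [this, key4' x y]; field_simp
  -- Step 3: P has full row rank
  have hsur : Function.Surjective P.mulVecLin := by
    intro v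
    refine ⟨(v 0 * h / (s * shoelace N x y)) • x + (v 1 * h / (s * shoelace N x y)) • y, ?_⟩
    have hmx : ∀ u : ZMod N → ℝ, P.mulVecLin u = fun α => ∑ i, P α i * u i := by
      intro u
      funext α
      simp [Matrix.mulVecLin_apply, Matrix.mulVec, dotProduct]
    rw [map_add, _root_.map_smul, _root_.map_smul, hmx, hmx]
    funext α
    fin_cases α <;>
      simp only [Pi.add_apply, Pi.smul_apply, smul_eq_mul, Fin.isValue, Fin.zero_eta,
        Fin.mk_one] <;>
      first
        | (rw [hx0, hy0]; field_simp; ring)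
        | (rw [hx1, hy1]; field_simp; ring)
  have hrange : LinearMap.range P.mulVecLin = ⊤ := LinearMap.range_eq_top.mpr hsur
  rw [hKP, Matrix.rank_transpose_mul_self, Matrix.rank, hrange]
  simp

end
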